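/- If a transition α not in the persistent set P(s) of a state s is enabled in s, and s →γ₀ s₁ →γ₁ ⋯ →γ_{m-1} s_m is a path where each γᵢ ∈ P(sᵢ) and α ∉ P(sᵢ) for all i < m, and each P(sᵢ) is persistent in sᵢ, then α remains enabled in s_m. -/
import Mathlib


namespace POR

variable {S : Type}

/-- A transition is a deterministic partial function on states; it is enabled
in `s` if it is defined at `s`. -/
def Enabledf (α : S → Option S) (s : S) : Prop := (α s).isSome

/-- Independence of two transitions in a given state: enabledness preservation
(in both directions) and commutativity. -/
def IndepAt (α β : S → Option S) (s : S) : Prop :=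
  (Enabledf α s → (Enabledf β s ↔ ∃ s', α s = some s' ∧ Enabledf β s')) ∧
  (Enabledf β s → (Enabledf α s ↔ ∃ s', β s = some s' ∧ Enabledf α s')) ∧
  (Enabledf α s → Enabledf β s → (α s).bind β = (β s).bind α)

/-- Two transitions are independent if they are independent in every state. -/
def Indep (α β : S → Option S) : Prop := ∀ s, IndepAt α β s

/-- `P` is persistent in `s`: every finite nonempty path from `s` using only
transitions outside `P` has its last transition independent in its source state
of every transition in `P`. -/
def PersistentIn (P : Set (S → Option S)) (s : S) : Prop :=
  (∀ α ∈ P, Enabledf α s) ∧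
  ∀ (n : ℕ) (st : ℕ → S) (tr : ℕ → S → Option S),
    st 0 = s →
    (∀ i ≤ n, tr i ∉ P) →
    (∀ i < n, tr i (st i) = some (st (i + 1))) →
    Enabledf (tr n) (st n) →
    ∀ β ∈ P, IndepAt (tr n) β (st n)

/-- Cycle condition: on any cycle taken under the reduced exploration, any
transition enabled at some state on the cycle belongs to the persistent set of
some state on the cycle. -/
def CycleCond (T : Set (S → Option S)) (P : S → Set (S → Option S)) : Prop :=
  ∀ (n : ℕ) (st : ℕ → S) (tr : ℕ → S → Option S),
    0 < n → st n = st 0 →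
    (∀ i < n, tr i ∈ T ∧ tr i ∈ P (st i) ∧ tr i (st i) = some (st (i + 1))) →
    ∀ α ∈ T, (∃ j < n, Enabledf α (st j)) → ∃ k < n, α ∈ P (st k)

/-- a transition enabled in  but not in the persistent set of any
state along a reduced path that avoids it remains enabled at the end of the path. -/
theorem not_persistent_stays_enabled (P : S → Set (S → Option S))
    (α : S → Option S) (m : ℕ) (st : ℕ → S) (tr : ℕ → S → Option S)
    (hPpers : ∀ i < m, PersistentIn (P (st i)) (st i))
    (hnot : ∀ i < m, α ∉ P (st i))
    (hnot0 : α ∉ P (st 0))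
    (hen : Enabledf α (st 0))
    (htr : ∀ i < m, tr i ∈ P (st i))
    (hpath : ∀ i < m, tr i (st i) = some (st (i + 1))) :
    Enabledf α (st m) := by
  have key : ∀ i, i ≤ m → Enabledf α (st i) := by
    intro i
    induction i with
    | zero => intro _; exact hen
    | succ n ih =>
      intro hi
      have hn : n < m := Nat.lt_of_succ_le hi
      have ihn := ih (Nat.le_of_lt hn)
      obtain ⟨hPen, hPind⟩ := hPpers n hn
      have hind := hPind 0 (fun _ => st n) (fun _ => α) rfl
        (fun _ _ => hnot n hn) (fun j hj => absurd hj (Nat.not_lt_zero j))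
        ihn (tr n) (htr n hn)
      obtain ⟨h1, h2, h3⟩ := hind
      obtain ⟨s', hs', hα⟩ := (h2 (hPen (tr n) (htr n hn))).mp ihn
      rw [hpath n hn] at hs'
      injection hs' with h
      rw [← h] at hα; exact hα
  exact key m le_rfl
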